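/- Let λ > 0. For each integer n > λ, let S(n) := sup{ C_λ(A) : A ⊂ ℝ^n, diam(A) ≤ 1 }. Then lim_{n→∞} S(n) = 1. -/

import Mathlib

open MeasureTheory Filter ENNReal Metric Topology

noncomputable section

/-- `ℝ^n` with the Euclidean metric. -/
abbrev Euc (n : ℕ) := EuclideanSpace ℝ (Fin n)

/-- The support of a Borel measure: the smallest closed set of full measure,
described as the set of points all of whose neighborhoods have positive measure. -/
def msupport {n : ℕ} (μ : Measure (Euc n)) : Set (Euc n) :=
  {x | ∀ U : Set (Euc n), IsOpen U → x ∈ U → 0 < μ U}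

/-- The repulsive (Riesz) energy `∬ |x-y|^(-λ) dμ dμ`, valued in `[0,∞]`. -/
def rieszEnergy (n : ℕ) (lam : ℝ) (μ : Measure (Euc n)) : ℝ≥0∞ :=
  ∫⁻ x, ∫⁻ y, edist x y ^ (-lam) ∂μ ∂μ

/-- The attractive–repulsive energy `E_{α,λ}(μ) = ∬ (|x-y|^α + |x-y|^(-λ)) dμ dμ`. -/
def energy (n : ℕ) (a lam : ℝ) (μ : Measure (Euc n)) : ℝ≥0∞ :=
  ∫⁻ x, ∫⁻ y, (edist x y ^ a + edist x y ^ (-lam)) ∂μ ∂μ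

/-- The `λ`-capacity of a set `A ⊆ ℝ^n`. -/
def capacity (n : ℕ) (lam : ℝ) (A : Set (Euc n)) : ℝ≥0∞ :=
  (⨅ ν : {ν : Measure (Euc n) // IsProbabilityMeasure ν ∧ msupport ν ⊆ A},
    rieszEnergy n lam ν.1)⁻¹

lemma rpow_neg_anti {lam : ℝ} (hl : 0 ≤ lam) {a b : ℝ≥0∞} (h : a ≤ b) :
    b ^ (-lam) ≤ a ^ (-lam) := by
  rw [ENNReal.rpow_neg, ENNReal.rpow_neg]
  exact ENNReal.inv_le_inv.2 (ENNReal.rpow_le_rpow h hl)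

lemma one_le_rpow_neg {lam : ℝ} (hl : 0 ≤ lam) {a : ℝ≥0∞} (h : a ≤ 1) :
    1 ≤ a ^ (-lam) := by
  have := rpow_neg_anti hl h
  simpa using this

lemma msupport_compl_null {n : ℕ} (ν : Measure (Euc n)) : ν (msupport ν)ᶜ = 0 := by
  set S := {s ∈ TopologicalSpace.countableBasis (Euc n) | ν s = 0} with hS
  have hc : S.Countable :=
    (TopologicalSpace.countable_countableBasis (Euc n)).mono (Set.sep_subset _ _)
  have h0 : ν (⋃₀ S) = 0 := (measure_sUnion_null_iff hc).2 fun s hs => hs.2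
  refine measure_mono_null (fun x hx => ?_) h0
  simp only [Set.mem_compl_iff, msupport, Set.mem_setOf_eq, not_forall] at hx
  obtain ⟨U, hU, hxU, hU0⟩ := hx
  have hU0' : ν U = 0 := by simpa using hU0
  obtain ⟨s, hsB, hxs, hsU⟩ :=
    (TopologicalSpace.isBasis_countableBasis (Euc n)).exists_subset_of_mem_open hxU hU
  exact ⟨s, ⟨hsB, measure_mono_null hsU hU0'⟩, hxs⟩

lemma capacity_le_one {n : ℕ} {lam : ℝ} (hl : 0 < lam) {A : Set (Euc n)}
    (hA : EMetric.diam A ≤ 1) : capacity n lam A ≤ 1 := by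
  rw [capacity, ENNReal.inv_le_one]
  refine le_iInf fun ν => ?_
  obtain ⟨ν, hp, hs⟩ := ν
  have hae : ∀ᵐ x ∂ν, x ∈ A := by
    rw [ae_iff]
    refine measure_mono_null (fun x hx => ?_) (msupport_compl_null ν)
    exact fun hm => hx (hs hm)
  have inner : ∀ᵐ x ∂ν, (1:ℝ≥0∞) ≤ ∫⁻ y, edist x y ^ (-lam) ∂ν := by
    filter_upwards [hae] with x hx
    calc (1:ℝ≥0∞) = ∫⁻ _, 1 ∂ν := by simp
    _ ≤ _ := by
        refine lintegral_mono_ae ?_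
        filter_upwards [hae] with y hy
        exact one_le_rpow_neg hl.le
          ((EMetric.edist_le_diam_of_mem hx hy).trans hA)
  calc (1:ℝ≥0∞) = ∫⁻ _, 1 ∂ν := by simp
  _ ≤ rieszEnergy n lam ν := lintegral_mono_ae inner

lemma dist_single_single_euc {n : ℕ} {r : ℝ} (hr : 0 ≤ r) {i j : Fin n} (hij : i ≠ j) :
    dist (EuclideanSpace.single i r) (EuclideanSpace.single j r) = Real.sqrt 2 * r := by
  rw [EuclideanSpace.dist_eq]
  have h : ∀ k : Fin n,
      dist (EuclideanSpace.single i r k) (EuclideanSpace.single j r k) ^ 2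
        = (if k = i then r ^ 2 else 0) + (if k = j then r ^ 2 else 0) := by
    intro k
    by_cases hki : k = i <;> by_cases hkj : k = j
    · exact absurd (hki.symm.trans hkj) hij
    · simp [EuclideanSpace.single_apply, hki, hkj, hij, hij.symm, Real.dist_eq, sq_abs]
    · simp [EuclideanSpace.single_apply, hki, hkj, hij, hij.symm, Real.dist_eq, sq_abs]
    · simp [EuclideanSpace.single_apply, hki, hkj]
  rw [Finset.sum_congr rfl fun k _ => h k, Finset.sum_add_distrib]
  simp only [Finset.sum_ite_eq', Finset.mem_univ, if_true]
  rw [show r ^ 2 + r ^ 2 = 2 * r ^ 2 by ring, Real.sqrt_mul (by norm_num), Real.sqrt_sq hr]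

lemma annulus_real_bound {lam ε : ℝ} (hε : 0 < ε) {n : ℕ}
    (hn : lam + 1 ≤ (n : ℝ)) (k : ℕ) :
    (ε / 2 ^ (k + 1)) ^ (-lam) * (ε / 2 ^ k) ^ n
      ≤ ε ^ ((n : ℝ) - lam) * 2 ^ lam * (1 / 2) ^ k := by
  have h2 : (0:ℝ) < 2 := two_pos
  have hk1 : ε / 2 ^ (k + 1) = ε * (2:ℝ) ^ (-((k:ℝ)+1)) := by
    rw [Real.rpow_neg h2.le, ← Real.rpow_natCast (2:ℝ) (k+1), div_eq_mul_inv]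
    push_cast; ring_nf
  have hk0 : ε / 2 ^ k = ε * (2:ℝ) ^ (-(k:ℝ)) := by
    rw [Real.rpow_neg h2.le, ← Real.rpow_natCast (2:ℝ) k, div_eq_mul_inv]
  have hhalf : ((1:ℝ)/2) ^ k = (2:ℝ) ^ (-(k:ℝ)) := by
    rw [Real.rpow_neg h2.le, Real.rpow_natCast, one_div, inv_pow]
  have L : (ε / 2 ^ (k + 1)) ^ (-lam) * (ε / 2 ^ k) ^ n
      = (ε ^ ((n:ℝ)) * (ε ^ lam)⁻¹) * (2:ℝ) ^ (((k:ℝ)+1)*lam - (k:ℝ)*(n:ℝ)) := by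
    rw [hk1, hk0, ← Real.rpow_natCast (ε * 2 ^ (-(k:ℝ))) n,
      Real.mul_rpow hε.le (Real.rpow_nonneg h2.le _),
      Real.mul_rpow hε.le (Real.rpow_nonneg h2.le _),
      ← Real.rpow_mul h2.le, ← Real.rpow_mul h2.le,
      Real.rpow_neg hε.le lam,
      show (2:ℝ) ^ (((k:ℝ)+1)*lam - (k:ℝ)*(n:ℝ))
        = 2 ^ (-((k:ℝ)+1) * -lam) * 2 ^ (-(k:ℝ) * (n:ℝ)) by
          rw [← Real.rpow_add h2]; ring_nf]
    ring
  have R : ε ^ ((n : ℝ) - lam) * 2 ^ lam * ((1:ℝ) / 2) ^ k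
      = (ε ^ ((n:ℝ)) * (ε ^ lam)⁻¹) * (2:ℝ) ^ (lam - (k:ℝ)) := by
    rw [hhalf, Real.rpow_sub hε,
      show (2:ℝ) ^ (lam - (k:ℝ)) = 2 ^ lam * 2 ^ (-(k:ℝ)) by
        rw [← Real.rpow_add h2]; ring_nf]
    rw [div_eq_mul_inv]; ring
  rw [L, R]
  refine mul_le_mul_of_nonneg_left
    (Real.rpow_le_rpow_of_exponent_le one_le_two ?_) (by positivity)
  have hk : (0:ℝ) ≤ (k:ℝ) := Nat.cast_nonneg k
  nlinarith

lemma pot_bound {n : ℕ} {lam ε : ℝ} (hl : 0 < lam) (hε : 0 < ε)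
    (hn : lam + 1 ≤ (n : ℝ)) (x : Euc n) :
    ∫⁻ y in closedBall x ε, edist x y ^ (-lam) ∂volume
      ≤ ENNReal.ofReal (ε ^ ((n:ℝ) - lam) * 2 ^ lam) * volume (ball (0:Euc n) 1) * 2 := by
  have hn1 : 1 ≤ n := by
    by_contra h
    push_neg at h
    interval_cases n <;> simp at hn <;> linarith
  haveI : Nonempty (Fin n) := ⟨⟨0, by omega⟩⟩
  haveI : Nontrivial (Euc n) := by
    refine ⟨0, EuclideanSpace.single ⟨0, by omega⟩ (1:ℝ), fun h => ?_⟩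
    have := congrFun (congrArg (fun v : Euc n => (v : Fin n → ℝ)) h) ⟨0, by omega⟩
    simp [EuclideanSpace.single_apply] at this
  set f : Euc n → ℝ≥0∞ := fun y => edist x y ^ (-lam) with hf
  set Ann : ℕ → Set (Euc n) := fun k => closedBall x (ε/2^k) \ closedBall x (ε/2^(k+1))
    with hAnn
  have cover : closedBall x ε ⊆ {x} ∪ ⋃ k, Ann k := by
    intro y hy
    by_cases hxy : y = x
    · exact Or.inl (by simp [hxy])
    refine Or.inr ?_
    have hd : 0 < dist y x := dist_pos.2 hxy
    have hdε : dist y x ≤ ε := mem_closedBall.1 hy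
    have hex : ∃ k : ℕ, ε / 2 ^ (k+1) < dist y x := by
      obtain ⟨m, hm⟩ := exists_pow_lt_of_lt_one (div_pos hd hε)
        (by norm_num : (1:ℝ)/2 < 1)
      refine ⟨m, ?_⟩
      have h1 : ((1:ℝ)/2) ^ (m+1) ≤ ((1:ℝ)/2) ^ m :=
        pow_le_pow_of_le_one (by norm_num) (by norm_num) (Nat.le_succ m)
      have h2 : ε / 2 ^ (m+1) = ε * ((1:ℝ)/2) ^ (m+1) := by
        rw [one_div, inv_pow, div_eq_mul_inv]
      rw [h2]
      calc ε * ((1:ℝ)/2) ^ (m+1) ≤ ε * ((1:ℝ)/2) ^ m := by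
            exact mul_le_mul_of_nonneg_left h1 hε.le
      _ < ε * (dist y x / ε) := mul_lt_mul_of_pos_left hm hε
      _ = dist y x := by field_simp
    set k0 := Nat.find hex with hk0def
    have hk0 : ε / 2 ^ (k0+1) < dist y x := Nat.find_spec hex
    have hle : dist y x ≤ ε / 2 ^ k0 := by
      rcases Nat.eq_zero_or_pos k0 with h0 | h0
      · rw [h0]; simpa using hdε
      · obtain ⟨m, hm⟩ := Nat.exists_eq_succ_of_ne_zero h0.ne'
        have := Nat.find_min hex (m := m) (by omega)
        rw [hm]
        exact not_lt.1 this
    refine Set.mem_iUnion.2 ⟨k0, mem_closedBall.2 hle, fun hmem => ?_⟩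
    exact absurd (mem_closedBall.1 hmem) (not_le.2 hk0)
  have hmeasAnn : ∀ k, MeasurableSet (Ann k) :=
    fun k => measurableSet_closedBall.diff measurableSet_closedBall
  have hsingle : ∫⁻ y in ({x} : Set (Euc n)), f y ∂volume = 0 := by
    rw [Measure.restrict_eq_zero.2 (measure_singleton x)]
    exact lintegral_zero_measure _
  have hannk : ∀ k : ℕ, ∫⁻ y in Ann k, f y ∂volume
      ≤ (ENNReal.ofReal (ε ^ ((n:ℝ) - lam) * 2 ^ lam) * volume (ball (0:Euc n) 1))
          * (ENNReal.ofReal (1/2)) ^ k := by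
    intro k
    have hfk : ∀ y ∈ Ann k, f y ≤ ENNReal.ofReal ((ε/2^(k+1)) ^ (-lam)) := by
      intro y hy
      have h1 : ε / 2 ^ (k+1) < dist x y := by
        rw [dist_comm]
        exact not_le.1 fun h => hy.2 (mem_closedBall.2 h)
      have h2 : ENNReal.ofReal (ε/2^(k+1)) ≤ edist x y := by
        rw [edist_dist]; exact ENNReal.ofReal_le_ofReal h1.le
      calc f y ≤ (ENNReal.ofReal (ε/2^(k+1))) ^ (-lam) := rpow_neg_anti hl.le h2
      _ = ENNReal.ofReal ((ε/2^(k+1)) ^ (-lam)) :=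
          ENNReal.ofReal_rpow_of_pos (by positivity)
    have hvol : volume (Ann k) ≤ ENNReal.ofReal ((ε/2^k) ^ n) * volume (ball (0:Euc n) 1) := by
      calc volume (Ann k) ≤ volume (closedBall x (ε/2^k)) :=
            measure_mono Set.diff_subset
      _ = ENNReal.ofReal ((ε/2^k) ^ Module.finrank ℝ (Euc n)) * volume (ball (0:Euc n) 1) :=
          Measure.addHaar_closedBall _ _ (by positivity)
      _ = _ := by rw [finrank_euclideanSpace_fin]
    calc ∫⁻ y in Ann k, f y ∂volume
        ≤ ∫⁻ _ in Ann k, ENNReal.ofReal ((ε/2^(k+1)) ^ (-lam)) ∂volume :=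
          setLIntegral_mono' (hmeasAnn k) hfk
    _ = ENNReal.ofReal ((ε/2^(k+1)) ^ (-lam)) * volume (Ann k) := by
        rw [setLIntegral_const]
    _ ≤ ENNReal.ofReal ((ε/2^(k+1)) ^ (-lam))
          * (ENNReal.ofReal ((ε/2^k) ^ n) * volume (ball (0:Euc n) 1)) :=
        mul_le_mul_right hvol _
    _ = ENNReal.ofReal ((ε/2^(k+1)) ^ (-lam) * (ε/2^k) ^ n) * volume (ball (0:Euc n) 1) := by
        rw [ENNReal.ofReal_mul (by positivity), mul_assoc]
    _ ≤ ENNReal.ofReal (ε ^ ((n:ℝ) - lam) * 2 ^ lam * (1/2) ^ k)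
          * volume (ball (0:Euc n) 1) := by
        exact mul_le_mul_left
          (ENNReal.ofReal_le_ofReal (annulus_real_bound hε hn k)) _
    _ = (ENNReal.ofReal (ε ^ ((n:ℝ) - lam) * 2 ^ lam) * volume (ball (0:Euc n) 1))
          * (ENNReal.ofReal (1/2)) ^ k := by
        rw [ENNReal.ofReal_mul (by positivity), ENNReal.ofReal_pow (by norm_num)]
        ring
  calc ∫⁻ y in closedBall x ε, f y ∂volume
      ≤ ∫⁻ y in {x} ∪ ⋃ k, Ann k, f y ∂volume := lintegral_mono_set cover
  _ ≤ (∫⁻ y in ({x} : Set (Euc n)), f y ∂volume) + ∫⁻ y in ⋃ k, Ann k, f y ∂volume :=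
      lintegral_union_le _ _ _
  _ = ∫⁻ y in ⋃ k, Ann k, f y ∂volume := by rw [hsingle, zero_add]
  _ ≤ ∑' k, ∫⁻ y in Ann k, f y ∂volume := lintegral_iUnion_le _ _
  _ ≤ ∑' k, (ENNReal.ofReal (ε ^ ((n:ℝ) - lam) * 2 ^ lam) * volume (ball (0:Euc n) 1))
        * (ENNReal.ofReal (1/2)) ^ k := ENNReal.tsum_le_tsum hannk
  _ = (ENNReal.ofReal (ε ^ ((n:ℝ) - lam) * 2 ^ lam) * volume (ball (0:Euc n) 1))
        * ∑' k, (ENNReal.ofReal (1/2)) ^ k := ENNReal.tsum_mul_left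
  _ ≤ _ := by
      refine mul_le_mul_right ?_ _
      rw [ENNReal.tsum_geometric]
      rw [show ENNReal.ofReal (1/2) = 2⁻¹ by
        rw [ENNReal.ofReal_div_of_pos (by norm_num)]; norm_num]
      rw [ENNReal.one_sub_inv_two]
      norm_num

lemma bathtub {n : ℕ} {lam ε : ℝ} (hl : 0 < lam) (hε : 0 < ε)
    {p : Euc n} (x : Euc n) :
    ∫⁻ y in closedBall p ε, edist x y ^ (-lam) ∂volume
      ≤ ∫⁻ y in closedBall x ε, edist x y ^ (-lam) ∂volume := by
  set f : Euc n → ℝ≥0∞ := fun y => edist x y ^ (-lam) with hf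
  set D := closedBall p ε with hD
  set C := closedBall x ε with hC
  have hDm : MeasurableSet D := measurableSet_closedBall
  have hCm : MeasurableSet C := measurableSet_closedBall
  have hvolDC : volume (D \ C) = volume (C \ D) := by
    have h1 : volume D = volume C := by
      rw [hD, hC, Measure.addHaar_closedBall _ _ hε.le, Measure.addHaar_closedBall _ _ hε.le]
    have hfinD : volume (D ∩ C) ≠ ⊤ :=
      (measure_mono Set.inter_subset_left |>.trans_lt measure_closedBall_lt_top).ne
    have hfinC : volume (C ∩ D) ≠ ⊤ :=
      (measure_mono Set.inter_subset_left |>.trans_lt measure_closedBall_lt_top).ne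
    have h2 : volume (D \ C) = volume D - volume (D ∩ C) := by
      rw [show D \ C = D \ (D ∩ C) by rw [Set.diff_self_inter]]
      exact measure_diff Set.inter_subset_left (hDm.inter hCm).nullMeasurableSet hfinD
    have h3 : volume (C \ D) = volume C - volume (C ∩ D) := by
      rw [show C \ D = C \ (C ∩ D) by rw [Set.diff_self_inter]]
      exact measure_diff Set.inter_subset_left (hCm.inter hDm).nullMeasurableSet hfinC
    rw [h2, h3, h1, Set.inter_comm]
  have key1 : ∫⁻ y in D \ C, f y ∂volume
      ≤ (ENNReal.ofReal ε) ^ (-lam) * volume (D \ C) := by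
    rw [← setLIntegral_const (D \ C)]
    refine setLIntegral_mono' (hDm.diff hCm) fun y hy => ?_
    have h1 : ε < dist x y := by
      rw [dist_comm]
      exact not_le.1 fun h => hy.2 (mem_closedBall.2 h)
    have h2 : ENNReal.ofReal ε ≤ edist x y := by
      rw [edist_dist]; exact ENNReal.ofReal_le_ofReal h1.le
    exact rpow_neg_anti hl.le h2
  have key2 : (ENNReal.ofReal ε) ^ (-lam) * volume (C \ D)
      ≤ ∫⁻ y in C \ D, f y ∂volume := by
    rw [← setLIntegral_const (C \ D)]
    refine setLIntegral_mono' (hCm.diff hDm) fun y hy => ?_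
    have h1 : dist x y ≤ ε := by rw [dist_comm]; exact mem_closedBall.1 hy.1
    have h2 : edist x y ≤ ENNReal.ofReal ε := by
      rw [edist_dist]; exact ENNReal.ofReal_le_ofReal h1
    exact rpow_neg_anti hl.le h2
  have split1 : ∫⁻ y in D, f y ∂volume
      = ∫⁻ y in D ∩ C, f y ∂volume + ∫⁻ y in D \ C, f y ∂volume := by
    rw [← lintegral_union (hDm.diff hCm)
        (Set.disjoint_sdiff_right.mono_left Set.inter_subset_right),
      Set.inter_union_diff]
  have split2 : ∫⁻ y in C, f y ∂volume
      = ∫⁻ y in C ∩ D, f y ∂volume + ∫⁻ y in C \ D, f y ∂volume := by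
    rw [← lintegral_union (hCm.diff hDm)
        (Set.disjoint_sdiff_right.mono_left Set.inter_subset_right),
      Set.inter_union_diff]
  calc ∫⁻ y in D, f y ∂volume
      = ∫⁻ y in D ∩ C, f y ∂volume + ∫⁻ y in D \ C, f y ∂volume := split1
  _ ≤ ∫⁻ y in D ∩ C, f y ∂volume + (ENNReal.ofReal ε) ^ (-lam) * volume (D \ C) :=
      add_le_add_right key1 _
  _ = ∫⁻ y in C ∩ D, f y ∂volume + (ENNReal.ofReal ε) ^ (-lam) * volume (C \ D) := by
      rw [hvolDC, Set.inter_comm]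
  _ ≤ ∫⁻ y in C ∩ D, f y ∂volume + ∫⁻ y in C \ D, f y ∂volume := add_le_add_right key2 _
  _ = ∫⁻ y in C, f y ∂volume := split2.symm

lemma exists_good (lam : ℝ) (hlam : 0 < lam) {ε : ℝ} (hε : 0 < ε) (hε8 : ε < 1/8)
    {n : ℕ} (hn : lam + 1 ≤ (n:ℝ)) :
    ∃ A : Set (Euc n), EMetric.diam A ≤ 1 ∧
      (ENNReal.ofReal ((1-4*ε) ^ (-lam))
        + 2 * ENNReal.ofReal (ε ^ (-lam) * 2 ^ lam) / n)⁻¹ ≤ capacity n lam A := by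
  have hn2 : 2 ≤ n := by
    by_contra h
    push_neg at h
    interval_cases n <;> norm_num at hn <;> linarith
  have hnn0 : ((n:ℝ≥0∞)) ≠ 0 := by
    simp only [ne_eq, Nat.cast_eq_zero]; omega
  have hnntop : ((n:ℝ≥0∞)) ≠ ⊤ := ENNReal.natCast_ne_top n
  haveI : Nonempty (Fin n) := ⟨⟨0, by omega⟩⟩
  have h2ε : 0 < 1 - 2*ε := by linarith
  have h4ε : 0 < 1 - 4*ε := by linarith
  set r : ℝ := (1 - 2*ε)/Real.sqrt 2 with hrdef
  have hsqrt2 : (0:ℝ) < Real.sqrt 2 := Real.sqrt_pos.2 (by norm_num)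
  have hr : 0 ≤ r := le_of_lt (div_pos h2ε hsqrt2)
  set p : Fin n → Euc n := fun i => EuclideanSpace.single i r with hpdef
  have hdist : ∀ i j : Fin n, i ≠ j → dist (p i) (p j) = 1 - 2*ε := by
    intro i j hij
    rw [hpdef]
    simp only
    rw [dist_single_single_euc hr hij, hrdef]
    field_simp
  have hdistle : ∀ i j : Fin n, dist (p i) (p j) ≤ 1 - 2*ε := by
    intro i j
    rcases eq_or_ne i j with h | h
    · simp [h, h2ε.le]
    · exact (hdist i j h).le
  set D : Fin n → Set (Euc n) := fun i => closedBall (p i) ε with hDdef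
  set A : Set (Euc n) := ⋃ i, D i with hAdef
  set B : ℝ≥0∞ := volume (ball (0 : Euc n) 1) with hBdef
  have hB0 : B ≠ 0 := (measure_ball_pos volume 0 one_pos).ne'
  have hBtop : B ≠ ⊤ := measure_ball_lt_top.ne
  set V : ℝ≥0∞ := ENNReal.ofReal (ε ^ n) * B with hVdef
  have hεn0 : ENNReal.ofReal (ε ^ n) ≠ 0 := by
    simp only [ne_eq, ENNReal.ofReal_eq_zero, not_le]
    positivity
  have hεntop : ENNReal.ofReal (ε ^ n) ≠ ⊤ := ENNReal.ofReal_ne_top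
  have hV0 : V ≠ 0 := mul_ne_zero hεn0 hB0
  have hVtop : V ≠ ⊤ := ENNReal.mul_ne_top hεntop hBtop
  have hDvol : ∀ i, volume (D i) = V := by
    intro i
    rw [hDdef]
    simp only
    rw [Measure.addHaar_closedBall _ _ hε.le, finrank_euclideanSpace_fin]
  set μ : Fin n → Measure (Euc n) := fun i => V⁻¹ • (volume.restrict (D i)) with hμdef
  set ν : Measure (Euc n) := (n : ℝ≥0∞)⁻¹ • ∑ i, μ i with hνdef
  -- integrals against ν
  have hints : ∀ g : Euc n → ℝ≥0∞,
      ∫⁻ z, g z ∂ν = (n:ℝ≥0∞)⁻¹ * ∑ i, (V⁻¹ * ∫⁻ z in D i, g z ∂volume) := by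
    intro g
    rw [hνdef, lintegral_smul_measure, lintegral_finset_sum_measure]
    exact congrArg _ (Finset.sum_congr rfl fun i _ => lintegral_smul_measure _ _)
  -- probability measure
  have hνuniv : ν Set.univ = 1 := by
    have h1 : ∫⁻ _, (1:ℝ≥0∞) ∂ν = ν Set.univ := lintegral_one
    rw [← h1, hints]
    simp only [setLIntegral_one]
    rw [Finset.sum_congr rfl fun i _ => by rw [hDvol i]]
    rw [Finset.sum_const, Finset.card_univ, Fintype.card_fin, nsmul_eq_mul,
      ENNReal.inv_mul_cancel hV0 hVtop, mul_one, ENNReal.inv_mul_cancel hnn0 hnntop]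
  have hνprob : IsProbabilityMeasure ν := ⟨hνuniv⟩
  -- diameter
  have hdiam : EMetric.diam A ≤ 1 := by
    refine EMetric.diam_le fun x hx y hy => ?_
    obtain ⟨i, hxi⟩ := Set.mem_iUnion.1 hx
    obtain ⟨j, hyj⟩ := Set.mem_iUnion.1 hy
    have h1 : dist x y ≤ 1 := by
      have := dist_triangle4 x (p i) (p j) y
      have hxi' : dist x (p i) ≤ ε := mem_closedBall.1 hxi
      have hyj' : dist (p j) y ≤ ε := by rw [dist_comm]; exact mem_closedBall.1 hyj
      have := hdistle i j
      linarith [dist_triangle4 x (p i) (p j) y]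
    rw [edist_dist]
    calc ENNReal.ofReal (dist x y) ≤ ENNReal.ofReal 1 := ENNReal.ofReal_le_ofReal h1
    _ = 1 := ENNReal.ofReal_one
  -- support
  have hsupp : msupport ν ⊆ A := by
    have hAclosed : IsClosed A := isClosed_iUnion_of_finite fun i => Metric.isClosed_closedBall
    have hνAc : ν Aᶜ = 0 := by
      rw [hνdef]
      simp only [Measure.smul_apply, smul_eq_mul]
      rw [Measure.finset_sum_apply]
      have : ∀ i : Fin n, μ i Aᶜ = 0 := by
        intro i
        rw [hμdef]
        simp only [Measure.smul_apply, smul_eq_mul]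
        rw [Measure.restrict_apply hAclosed.measurableSet.compl]
        have hemp : Aᶜ ∩ D i = ∅ := by
          rw [Set.eq_empty_iff_forall_notMem]
          exact fun z hz => hz.1 (Set.mem_iUnion.2 ⟨i, hz.2⟩)
        rw [hemp, measure_empty, mul_zero]
      rw [Finset.sum_congr rfl fun i _ => this i]
      simp
    intro x hx
    by_contra hxA
    have := hx Aᶜ hAclosed.isOpen_compl hxA
    rw [hνAc] at this
    exact lt_irrefl 0 this
  set Ccr : ℝ≥0∞ := ENNReal.ofReal ((1-4*ε) ^ (-lam)) with hCcr
  set Cd : ℝ≥0∞ := ENNReal.ofReal (ε ^ (-lam) * 2 ^ lam) with hCd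
  have hDmeas : ∀ i, MeasurableSet (D i) := fun i => measurableSet_closedBall
  -- cross bound
  have hcross : ∀ i j : Fin n, i ≠ j → ∀ x ∈ D i,
      V⁻¹ * ∫⁻ y in D j, edist x y ^ (-lam) ∂volume ≤ Ccr := by
    intro i j hij x hxi
    have hb : ∀ y ∈ D j, edist x y ^ (-lam) ≤ Ccr := by
      intro y hyj
      have h1 : 1 - 4*ε ≤ dist x y := by
        have h4 := dist_triangle4 (p i) x y (p j)
        have h2 : dist (p i) x ≤ ε := by rw [dist_comm]; exact mem_closedBall.1 hxi
        have h3 : dist y (p j) ≤ ε := mem_closedBall.1 hyj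
        have h5 := hdist i j hij
        linarith
      have h2 : ENNReal.ofReal (1-4*ε) ≤ edist x y := by
        rw [edist_dist]; exact ENNReal.ofReal_le_ofReal h1
      calc edist x y ^ (-lam) ≤ (ENNReal.ofReal (1-4*ε)) ^ (-lam) :=
            rpow_neg_anti hlam.le h2
      _ = Ccr := ENNReal.ofReal_rpow_of_pos h4ε
    calc V⁻¹ * ∫⁻ y in D j, edist x y ^ (-lam) ∂volume
        ≤ V⁻¹ * ∫⁻ _ in D j, Ccr ∂volume :=
          mul_le_mul_right (setLIntegral_mono' (hDmeas j) hb) _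
    _ = V⁻¹ * (Ccr * V) := by rw [setLIntegral_const, hDvol j]
    _ = (V⁻¹ * V) * Ccr := by ring
    _ = Ccr := by rw [ENNReal.inv_mul_cancel hV0 hVtop, one_mul]
  -- diagonal bound
  have hdiag : ∀ i : Fin n, ∀ x ∈ D i,
      V⁻¹ * ∫⁻ y in D i, edist x y ^ (-lam) ∂volume ≤ 2 * Cd := by
    intro i x hxi
    have h1 : ∫⁻ y in D i, edist x y ^ (-lam) ∂volume
        ≤ ENNReal.ofReal (ε ^ ((n:ℝ) - lam) * 2 ^ lam) * B * 2 :=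
      (bathtub hlam hε x).trans (pot_bound hlam hε hn x)
    have h2 : ENNReal.ofReal (ε ^ ((n:ℝ) - lam) * 2 ^ lam)
        = ENNReal.ofReal (ε ^ n) * Cd := by
      rw [hCd, ← ENNReal.ofReal_mul (by positivity)]
      congr 1
      rw [Real.rpow_sub hε, Real.rpow_natCast, Real.rpow_neg hε.le, div_eq_mul_inv]
      ring
    rw [h2] at h1
    calc V⁻¹ * ∫⁻ y in D i, edist x y ^ (-lam) ∂volume
        ≤ V⁻¹ * (ENNReal.ofReal (ε ^ n) * Cd * B * 2) := mul_le_mul_right h1 _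
    _ = (ENNReal.ofReal (ε^n))⁻¹ * B⁻¹ * (ENNReal.ofReal (ε^n) * Cd * B * 2) := by
        rw [hVdef, ENNReal.mul_inv (Or.inl hεn0) (Or.inl hεntop)]
    _ = ((ENNReal.ofReal (ε^n))⁻¹ * ENNReal.ofReal (ε^n)) * (B⁻¹ * B) * (2 * Cd) := by
        ring
    _ = 2 * Cd := by
        rw [ENNReal.inv_mul_cancel hεn0 hεntop, ENNReal.inv_mul_cancel hB0 hBtop,
          one_mul, one_mul]
  -- inner integral bound
  have hinner : ∀ i : Fin n, ∀ x ∈ D i,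
      ∫⁻ y, edist x y ^ (-lam) ∂ν ≤ Ccr + 2 * Cd / n := by
    intro i x hxi
    rw [hints]
    have hterm : ∀ j : Fin n,
        V⁻¹ * ∫⁻ y in D j, edist x y ^ (-lam) ∂volume
          ≤ Ccr + (if j = i then 2 * Cd else 0) := by
      intro j
      rcases eq_or_ne j i with h | h
      · subst h
        rw [if_pos rfl]
        exact (hdiag j x hxi).trans le_add_self
      · rw [if_neg h, add_zero]
        exact hcross i j (Ne.symm h) x hxi
    calc (n:ℝ≥0∞)⁻¹ * ∑ j, (V⁻¹ * ∫⁻ y in D j, edist x y ^ (-lam) ∂volume)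
        ≤ (n:ℝ≥0∞)⁻¹ * ∑ j, (Ccr + (if j = i then 2 * Cd else 0)) :=
          mul_le_mul_right (Finset.sum_le_sum fun j _ => hterm j) _
    _ = (n:ℝ≥0∞)⁻¹ * ((n:ℝ≥0∞) * Ccr + 2 * Cd) := by
        rw [Finset.sum_add_distrib, Finset.sum_const, Finset.card_univ, Fintype.card_fin,
          nsmul_eq_mul, Finset.sum_ite_eq' Finset.univ i (fun _ => 2*Cd)]
        simp
    _ = Ccr + 2 * Cd / n := by
        rw [mul_add, ← mul_assoc, ENNReal.inv_mul_cancel hnn0 hnntop, one_mul,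
          ENNReal.div_eq_inv_mul]
  -- energy bound
  have henergy : rieszEnergy n lam ν ≤ Ccr + 2 * Cd / n := by
    rw [rieszEnergy, hints]
    calc (n:ℝ≥0∞)⁻¹ * ∑ i, (V⁻¹ * ∫⁻ x in D i, (∫⁻ y, edist x y ^ (-lam) ∂ν) ∂volume)
        ≤ (n:ℝ≥0∞)⁻¹ * ∑ i, (V⁻¹ * ((Ccr + 2 * Cd / n) * V)) := by
          refine mul_le_mul_right (Finset.sum_le_sum fun i _ => mul_le_mul_right ?_ _) _
          calc ∫⁻ x in D i, (∫⁻ y, edist x y ^ (-lam) ∂ν) ∂volume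
              ≤ ∫⁻ _ in D i, (Ccr + 2 * Cd / n) ∂volume :=
                setLIntegral_mono' (hDmeas i) (hinner i)
          _ = (Ccr + 2 * Cd / n) * V := by rw [setLIntegral_const, hDvol i]
    _ = Ccr + 2 * Cd / n := by
        rw [Finset.sum_congr rfl (fun i _ => by
          rw [show V⁻¹ * ((Ccr + 2*Cd/n) * V) = (V⁻¹*V)*(Ccr+2*Cd/n) by ring,
            ENNReal.inv_mul_cancel hV0 hVtop, one_mul])]
        rw [Finset.sum_const, Finset.card_univ, Fintype.card_fin, nsmul_eq_mul,
          ← mul_assoc, ENNReal.inv_mul_cancel hnn0 hnntop, one_mul]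
  refine ⟨A, hdiam, ?_⟩
  rw [capacity]
  exact ENNReal.inv_le_inv.2 ((iInf_le _ ⟨ν, hνprob, hsupp⟩).trans henergy)

/-- with `S(n) = sup{C_λ(A) : A ⊆ ℝ^n, diam A ≤ 1}`, one has
`S(n) → 1` as `n → ∞`. -/
theorem stmt15 (lam : ℝ) (hlam : 0 < lam) :
    Tendsto
      (fun n : ℕ => ⨆ A : {A : Set (Euc n) // EMetric.diam A ≤ 1}, capacity n lam A.1)
      atTop (𝓝 1) := by
  have hub : ∀ n : ℕ,
      (⨆ A : {A : Set (Euc n) // EMetric.diam A ≤ 1}, capacity n lam A.1) ≤ 1 :=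
    fun n => iSup_le fun A => capacity_le_one hlam A.2
  rw [tendsto_order]
  constructor
  · intro a ha
    have hainv : (1:ℝ≥0∞) < a⁻¹ := ENNReal.one_lt_inv.2 ha
    obtain ⟨c, hc0, h1c, hca⟩ := ENNReal.lt_iff_exists_real_btwn.1 hainv
    have hc1 : (1:ℝ) < c := by rwa [ENNReal.one_lt_ofReal] at h1c
    -- choose ε
    have cont : Tendsto (fun ε : ℝ => (1-4*ε) ^ (-lam)) (𝓝[>] 0) (𝓝 1) := by
      have h1 : Tendsto (fun ε : ℝ => 1-4*ε) (𝓝 0) (𝓝 1) := by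
        have := ((continuous_const.sub ((continuous_const.mul continuous_id')) : Continuous
          (fun ε : ℝ => 1-4*ε))).tendsto 0
        convert this using 2; norm_num; show (1:ℝ) = 1 - 4 * 0; norm_num
      have h2 : ContinuousAt (fun x : ℝ => x ^ (-lam)) 1 :=
        Real.continuousAt_rpow_const 1 (-lam) (Or.inl one_ne_zero)
      have h3 := h2.tendsto.comp h1
      rw [Real.one_rpow] at h3
      exact h3.mono_left nhdsWithin_le_nhds
    have hev1 : ∀ᶠ ε in 𝓝[>] (0:ℝ), (1-4*ε) ^ (-lam) < c :=
      cont.eventually_lt_const hc1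
    have hev2 : ∀ᶠ ε in 𝓝[>] (0:ℝ), ε < 1/8 :=
      eventually_nhdsWithin_of_eventually_nhds (eventually_lt_nhds (by norm_num : (0:ℝ) < 1/8))
    have hev3 : ∀ᶠ ε in 𝓝[>] (0:ℝ), 0 < ε := self_mem_nhdsWithin
    obtain ⟨ε, hεc, hε8, hε0⟩ := (hev1.and (hev2.and hev3)).exists
    set Ccr : ℝ≥0∞ := ENNReal.ofReal ((1-4*ε) ^ (-lam)) with hCcr
    set Cd : ℝ≥0∞ := ENNReal.ofReal (ε ^ (-lam) * 2 ^ lam) with hCd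
    have hCcra : Ccr < a⁻¹ :=
      lt_trans ((ENNReal.ofReal_lt_ofReal_iff (by linarith)).2 hεc) hca
    have hCdtop : 2 * Cd ≠ ⊤ := ENNReal.mul_ne_top (by norm_num) ENNReal.ofReal_ne_top
    have hlim : Tendsto (fun n : ℕ => Ccr + 2 * Cd / n) atTop (𝓝 Ccr) := by
      have h0 : Tendsto (fun n : ℕ => 2 * Cd * ((n:ℝ≥0∞))⁻¹) atTop (𝓝 0) := by
        have := ENNReal.Tendsto.const_mul (a := 2*Cd)
          ENNReal.tendsto_inv_nat_nhds_zero (Or.inr hCdtop)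
        simpa using this
      have h1 := h0.const_add Ccr
      simpa [div_eq_mul_inv] using h1
    have hevn1 : ∀ᶠ n : ℕ in atTop, Ccr + 2 * Cd / n < a⁻¹ :=
      hlim.eventually_lt_const hCcra
    have hevn2 : ∀ᶠ n : ℕ in atTop, lam + 1 ≤ (n:ℝ) :=
      tendsto_natCast_atTop_atTop.eventually_ge_atTop (lam+1)
    filter_upwards [hevn1, hevn2] with n hn1 hn2
    obtain ⟨A, hdiam, hcap⟩ := exists_good lam hlam hε0 hε8 hn2
    have hlt : a < capacity n lam A := by
      rw [show a = (a⁻¹)⁻¹ from (inv_inv a).symm]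
      exact lt_of_lt_of_le (ENNReal.inv_lt_inv.2 hn1) hcap
    exact lt_of_lt_of_le hlt
      (le_iSup (fun A : {A : Set (Euc n) // EMetric.diam A ≤ 1} => capacity n lam A.1)
        ⟨A, hdiam⟩)
  · intro a ha
    exact Eventually.of_forall fun n => lt_of_le_of_lt (hub n) ha
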